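/- Let n = 2^r − 1 with r ≥ 3, let C ⊆ F_2^n be a perfect binary code, let i be a coordinate, and let x ∈ C be an i-even codeword. Then the number of i-odd codewords of C at Hamming distance exactly 3 from x equals (n−1)(n−3)/6. -/

import Mathlib

/-- `C` is a perfect binary single-error-correcting code: every vector is at
Hamming distance at most 1 from exactly one codeword. -/
def IsPerfectCode (n : ℕ) (C : Set (Fin n → ZMod 2)) : Prop :=
  ∀ v : Fin n → ZMod 2, ∃! c, c ∈ C ∧ hammingDist v c ≤ 1

/-- `x` is `i`-even: either `wt x` is odd and `x i = 1`, or `wt x` is even and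
`x i = 0`. -/
def IEven (n : ℕ) (i : Fin n) (x : Fin n → ZMod 2) : Prop :=
  (Odd (hammingNorm x) ∧ x i = 1) ∨ (Even (hammingNorm x) ∧ x i = 0)

open Finset

lemma zmod2_ne : ∀ u w : ZMod 2, u ≠ w ↔ w = u + 1 := by decide
lemma zmod2_add_one_ne : ∀ u : ZMod 2, u ≠ u + 1 := by decide

lemma natCast_zmod2_one (m : ℕ) : (m : ZMod 2) = 1 ↔ m % 2 = 1 := by
  rw [← ZMod.natCast_mod m 2]
  have h : m % 2 = 0 ∨ m % 2 = 1 := by omega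
  rcases h with h | h <;> rw [h] <;> simp

lemma cast_hammingNorm {n : ℕ} (z : Fin n → ZMod 2) : ((hammingNorm z : ZMod 2)) = ∑ j, z j := by
  classical
  rw [hammingNorm, ← Finset.sum_filter_ne_zero Finset.univ]
  have h1 : ∀ u : ZMod 2, u ≠ 0 → u = 1 := by decide
  rw [Finset.sum_congr rfl (fun j hj => h1 _ (Finset.mem_filter.mp hj).2)]
  simp [Finset.sum_const]

lemma parity_sum {n : ℕ} {x y : Fin n → ZMod 2} (h3 : hammingDist x y = 3) :
    Odd (hammingNorm x + hammingNorm y) := by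
  have hneg : ∀ u : ZMod 2, -u = u := by decide
  have key : ((hammingNorm x + hammingNorm y : ℕ) : ZMod 2) = 1 := by
    push_cast
    rw [cast_hammingNorm, cast_hammingNorm, ← Finset.sum_add_distrib]
    have : ∀ j, x j + y j = (x - y) j := by
      intro j; simp [sub_eq_add_neg, hneg]
    rw [Finset.sum_congr rfl (fun j _ => this j), ← cast_hammingNorm,
      sub_eq_neg_add, ← hammingDist_eq_hammingNorm, hammingDist_comm, h3]
    decide
  rw [Nat.odd_iff]
  exact (natCast_zmod2_one _).mp key

lemma iodd_iff {n : ℕ} {i : Fin n} {x y : Fin n → ZMod 2} (hxe : IEven n i x)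
    (h3 : hammingDist x y = 3) : (¬ IEven n i y ↔ y i = x i) := by
  have hpar := parity_sum h3
  have hvals : ∀ u : ZMod 2, u = 0 ∨ u = 1 := by decide
  rcases hxe with ⟨hox, hx1⟩ | ⟨hex, hx0⟩
  · have hey : Even (hammingNorm y) := by
      rw [Nat.odd_iff] at hpar hox; rw [Nat.even_iff]; omega
    have hnoy : ¬ Odd (hammingNorm y) := by simp [Nat.not_odd_iff_even, hey]
    rw [hx1]
    constructor
    · intro h
      rcases hvals (y i) with h0 | h1
      · exact absurd (Or.inr ⟨hey, h0⟩) h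
      · exact h1
    · intro h1 hcon
      rcases hcon with ⟨ho, _⟩ | ⟨_, h0⟩
      · exact hnoy ho
      · rw [h1] at h0; exact one_ne_zero h0
  · have hoy : Odd (hammingNorm y) := by
      rw [Nat.even_iff] at hex; rw [Nat.odd_iff] at hpar ⊢; omega
    have hney : ¬ Even (hammingNorm y) := by simp [Nat.not_even_iff_odd, hoy]
    rw [hx0]
    constructor
    · intro h
      rcases hvals (y i) with h0 | h1
      · exact h0
      · exact absurd (Or.inl ⟨hoy, h1⟩) h
    · intro h0 hcon
      rcases hcon with ⟨_, h1⟩ | ⟨he, _⟩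
      · rw [h0] at h1; exact one_ne_zero h1.symm
      · exact hney he

section
variable {n : ℕ}

/-- The set of coordinates where `x` and `y` differ. -/
def ds (x y : Fin n → ZMod 2) : Finset (Fin n) := {j | x j ≠ y j}

lemma mem_ds {x y : Fin n → ZMod 2} {j : Fin n} : j ∈ ds x y ↔ x j ≠ y j := by simp [ds]

lemma hd_eq (x y : Fin n → ZMod 2) : hammingDist x y = (ds x y).card := rfl

lemma mindist {C : Set (Fin n → ZMod 2)} (hC : IsPerfectCode n C)
    {c c' : Fin n → ZMod 2} (hc : c ∈ C) (hc' : c' ∈ C) (hne : c ≠ c') :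
    3 ≤ hammingDist c c' := by
  by_contra h
  push_neg at h
  rcases Nat.lt_or_ge (hammingDist c c') 2 with h1 | h2
  · obtain ⟨z, _, hz⟩ := hC c
    have e1 : c = z := hz c ⟨hc, by simp⟩
    have e2 : c' = z := hz c' ⟨hc', by omega⟩
    exact hne (e1.trans e2.symm)
  · have hcard : (ds c c').card = 2 := by rw [← hd_eq]; omega
    obtain ⟨a, b, hab, hds⟩ := Finset.card_eq_two.mp hcard
    have ha : c a ≠ c' a := mem_ds.mp (by rw [hds]; simp)
    have hb : c b ≠ c' b := mem_ds.mp (by rw [hds]; simp)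
    set v := Function.update c a (c' a) with hv
    have hvc : hammingDist v c ≤ 1 := by
      rw [hd_eq]
      have : ds v c ⊆ {a} := by
        intro j hj
        rw [mem_ds] at hj
        simp only [Finset.mem_singleton]
        by_contra hja
        exact hj (by rw [hv, Function.update_of_ne hja])
      calc (ds v c).card ≤ ({a} : Finset (Fin n)).card := Finset.card_le_card this
        _ = 1 := by simp
    have hvc' : hammingDist v c' ≤ 1 := by
      rw [hd_eq]
      have : ds v c' ⊆ {b} := by
        intro j hj
        rw [mem_ds] at hj
        simp only [Finset.mem_singleton]
        by_contra hjb
        apply hj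
        by_cases hja : j = a
        · subst hja; rw [hv, Function.update_self]
        · rw [hv, Function.update_of_ne hja]
          by_contra hcj
          have : j ∈ ds c c' := mem_ds.mpr hcj
          rw [hds] at this
          simp [hja, hjb] at this
      calc (ds v c').card ≤ ({b} : Finset (Fin n)).card := Finset.card_le_card this
        _ = 1 := by simp
    obtain ⟨z, _, hz⟩ := hC v
    exact hne ((hz c ⟨hc, hvc⟩).trans (hz c' ⟨hc', hvc'⟩).symm)

lemma steiner {C : Set (Fin n → ZMod 2)} (hC : IsPerfectCode n C)
    {x : Fin n → ZMod 2} (hx : x ∈ C) {a b : Fin n} (hab : a ≠ b) :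
    ∃! y, (y ∈ C ∧ hammingDist x y = 3) ∧ x a ≠ y a ∧ x b ≠ y b := by
  set v := Function.update (Function.update x a (x a + 1)) b (x b + 1) with hv
  have hva : v a = x a + 1 := by
    rw [hv, Function.update_of_ne hab, Function.update_self]
  have hvb : v b = x b + 1 := by rw [hv, Function.update_self]
  have hvj : ∀ j, j ≠ a → j ≠ b → v j = x j := by
    intro j hja hjb
    rw [hv, Function.update_of_ne hjb, Function.update_of_ne hja]
  have hdsv : ds x v = {a, b} := by
    ext j
    rw [mem_ds]
    simp only [Finset.mem_insert, Finset.mem_singleton]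
    constructor
    · intro hj
      by_contra hc
      push_neg at hc
      exact hj (hvj j hc.1 hc.2).symm
    · rintro (rfl | rfl)
      · rw [hva]; exact zmod2_add_one_ne _
      · rw [hvb]; exact zmod2_add_one_ne _
  have hdxv : hammingDist x v = 2 := by
    rw [hd_eq, hdsv, Finset.card_insert_of_notMem (by simpa using hab), Finset.card_singleton]
  obtain ⟨c, ⟨hcC, hvc⟩, hu⟩ := hC v
  have hcx : c ≠ x := by
    rintro rfl
    rw [hammingDist_comm] at hdxv
    omega
  have h3 : 3 ≤ hammingDist x c := mindist hC hx hcC (Ne.symm hcx)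
  have hle : hammingDist x c ≤ 3 := by
    calc hammingDist x c ≤ hammingDist x v + hammingDist v c := hammingDist_triangle x v c
      _ ≤ 3 := by omega
  have hd3 : hammingDist x c = 3 := le_antisymm hle h3
  have hsub : ds x c ⊆ ds x v ∪ ds v c := by
    intro j hj
    rw [mem_ds] at hj
    rw [Finset.mem_union, mem_ds, mem_ds]
    by_contra hcc
    push_neg at hcc
    exact hj (hcc.1.trans hcc.2)
  have hcardu : (ds x v ∪ ds v c).card ≤ 3 := by
    calc (ds x v ∪ ds v c).card ≤ (ds x v).card + (ds v c).card := Finset.card_union_le _ _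
      _ ≤ 3 := by rw [← hd_eq, ← hd_eq]; omega
  have heq : ds x c = ds x v ∪ ds v c :=
    Finset.eq_of_subset_of_card_le hsub (by rw [← hd_eq, hd3]; exact hcardu)
  have hmem : ∀ j, j ∈ ds x v → j ∈ ds x c := by
    intro j hj; rw [heq]; exact Finset.mem_union_left _ hj
  have hya : x a ≠ c a := mem_ds.mp (hmem a (by rw [hdsv]; simp))
  have hyb : x b ≠ c b := mem_ds.mp (hmem b (by rw [hdsv]; simp))
  refine ⟨c, ⟨⟨hcC, hd3⟩, hya, hyb⟩, ?_⟩
  have key : ∀ y y' : Fin n → ZMod 2,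
      ((y ∈ C ∧ hammingDist x y = 3) ∧ x a ≠ y a ∧ x b ≠ y b) →
      ((y' ∈ C ∧ hammingDist x y' = 3) ∧ x a ≠ y' a ∧ x b ≠ y' b) → y = y' := by
    rintro y y' ⟨⟨hyC, hy3⟩, hya', hyb'⟩ ⟨⟨hy'C, hy'3⟩, hy'a, hy'b⟩
    by_contra hne
    have h3' : 3 ≤ hammingDist y y' := mindist hC hyC hy'C hne
    have hsub2 : ds y y' ⊆ (ds x y \ {a, b}) ∪ (ds x y' \ {a, b}) := by
      intro j hj
      rw [mem_ds] at hj
      have hjab : j ≠ a ∧ j ≠ b := by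
        constructor
        · rintro rfl
          exact hj (((zmod2_ne _ _).mp hya').trans ((zmod2_ne _ _).mp hy'a).symm)
        · rintro rfl
          exact hj (((zmod2_ne _ _).mp hyb').trans ((zmod2_ne _ _).mp hy'b).symm)
      rw [Finset.mem_union, Finset.mem_sdiff, Finset.mem_sdiff, mem_ds, mem_ds]
      have hnab : j ∉ ({a, b} : Finset (Fin n)) := by simp [hjab.1, hjab.2]
      by_cases h1 : x j = y j
      · exact Or.inr ⟨fun h2 => hj (h1.symm.trans h2), hnab⟩
      · exact Or.inl ⟨h1, hnab⟩
    have hab_sub : ∀ y₀ : Fin n → ZMod 2, x a ≠ y₀ a → x b ≠ y₀ b →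
        hammingDist x y₀ = 3 → (ds x y₀ \ {a, b}).card ≤ 1 := by
      intro y₀ h1 h2 h33
      have hss : ({a, b} : Finset (Fin n)) ⊆ ds x y₀ := by
        intro j hj
        rcases Finset.mem_insert.mp hj with rfl | hj
        · exact mem_ds.mpr h1
        · rw [Finset.mem_singleton] at hj; subst hj; exact mem_ds.mpr h2
      rw [Finset.card_sdiff_of_subset hss, ← hd_eq, h33,
        Finset.card_insert_of_notMem (by simpa using hab), Finset.card_singleton]
    have : hammingDist y y' ≤ 2 := by
      rw [hd_eq]
      calc (ds y y').card ≤ ((ds x y \ {a, b}) ∪ (ds x y' \ {a, b})).card :=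
            Finset.card_le_card hsub2
        _ ≤ (ds x y \ {a, b}).card + (ds x y' \ {a, b}).card := Finset.card_union_le _ _
        _ ≤ 2 := by
            have := hab_sub y hya' hyb' hy3
            have := hab_sub y' hy'a hy'b hy'3
            omega
    omega
  intro y hy
  exact key y c hy ⟨⟨hcC, hd3⟩, hya, hyb⟩

lemma third_elt {x y : Fin n → ZMod 2} {a b : Fin n} (hab : a ≠ b)
    (h3 : hammingDist x y = 3) (ha : x a ≠ y a) (hb : x b ≠ y b) :
    ∃ w, ds x y \ {a, b} = {w} := by
  have hss : ({a, b} : Finset (Fin n)) ⊆ ds x y := by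
    intro j hj
    rcases Finset.mem_insert.mp hj with rfl | hj
    · exact mem_ds.mpr ha
    · rw [Finset.mem_singleton] at hj; subst hj; exact mem_ds.mpr hb
  have hcard : (ds x y \ {a, b}).card = 1 := by
    rw [Finset.card_sdiff_of_subset hss, ← hd_eq, h3,
      Finset.card_insert_of_notMem (by simpa using hab), Finset.card_singleton]
  exact Finset.card_eq_one.mp hcard

lemma count_main (hn7 : 7 ≤ n) {C : Set (Fin n → ZMod 2)} (hC : IsPerfectCode n C)
    (i : Fin n) {x : Fin n → ZMod 2} (hx : x ∈ C) [DecidablePred (· ∈ C)] :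
    (Finset.univ.filter (fun y => y ∈ C ∧ hammingDist x y = 3 ∧ y i = x i)).card
      = (n - 1) * (n - 3) / 6 := by
  classical
  set S : Finset (Fin n → ZMod 2) :=
    Finset.univ.filter (fun y => y ∈ C ∧ hammingDist x y = 3 ∧ y i = x i) with hS
  have hmemS : ∀ {y}, y ∈ S ↔ y ∈ C ∧ hammingDist x y = 3 ∧ y i = x i := by
    intro y; simp [hS]
  set T : Finset (Fin n × Fin n) := (Finset.univ.erase i).offDiag with hT
  have hmemT : ∀ {p : Fin n × Fin n}, p ∈ T ↔ p.1 ≠ i ∧ p.2 ≠ i ∧ p.1 ≠ p.2 := by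
    intro p; simp [hT, Finset.mem_offDiag]
  have hTcard : T.card = (n - 1) * (n - 2) := by
    rw [hT, Finset.offDiag_card, Finset.card_erase_of_mem (Finset.mem_univ i),
      Finset.card_univ, Fintype.card_fin]
    obtain ⟨k, rfl⟩ : ∃ k, n = k + 7 := ⟨n - 7, by omega⟩
    have e1 : k + 7 - 1 = k + 6 := by omega
    have e2 : k + 7 - 2 = k + 5 := by omega
    rw [e1, e2]
    have : (k + 6) * (k + 6) = (k + 6) * (k + 5) + (k + 6) := by ring
    omega
  set f : (Fin n → ZMod 2) → Finset (Fin n × Fin n) := fun y => (ds x y).offDiag with hf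
  have hmemf : ∀ {y} {p : Fin n × Fin n},
      p ∈ f y ↔ x p.1 ≠ y p.1 ∧ x p.2 ≠ y p.2 ∧ p.1 ≠ p.2 := by
    intro y p
    simp [hf, Finset.mem_offDiag, mem_ds]
  have hfcard : ∀ y ∈ S, (f y).card = 6 := by
    intro y hy
    obtain ⟨_, h3, _⟩ := hmemS.mp hy
    rw [hf]
    simp only [Finset.offDiag_card, ← hd_eq, h3]
  have hfsubT : ∀ y ∈ S, f y ⊆ T := by
    intro y hy p hp
    obtain ⟨_, h3, hyi⟩ := hmemS.mp hy
    obtain ⟨h1, h2, h12⟩ := hmemf.mp hp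
    refine hmemT.mpr ⟨?_, ?_, h12⟩
    · rintro rfl; exact h1 hyi.symm
    · rintro rfl; exact h2 hyi.symm
  set Bad : Finset (Fin n × Fin n) := T.filter (fun p => ∃ y,
    (y ∈ C ∧ hammingDist x y = 3) ∧ x i ≠ y i ∧ x p.1 ≠ y p.1 ∧ x p.2 ≠ y p.2) with hB
  have hmemB : ∀ {p : Fin n × Fin n}, p ∈ Bad ↔ p ∈ T ∧ ∃ y,
      (y ∈ C ∧ hammingDist x y = 3) ∧ x i ≠ y i ∧ x p.1 ≠ y p.1 ∧ x p.2 ≠ y p.2 := by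
    intro p; simp [hB]
  have hBadcard : Bad.card = n - 1 := by
    have hcarderase : (Finset.univ.erase i).card = n - 1 := by
      rw [Finset.card_erase_of_mem (Finset.mem_univ i), Finset.card_univ, Fintype.card_fin]
    rw [← hcarderase]
    apply Finset.card_bij (fun p _ => p.1)
    · intro p hp
      exact Finset.mem_erase.mpr ⟨(hmemT.mp (hmemB.mp hp).1).1, Finset.mem_univ _⟩
    · intro p hp q hq hpq
      obtain ⟨hpT, y, hy, hyi, hyp1, hyp2⟩ := hmemB.mp hp
      obtain ⟨hqT, z, hz, hzi, hzp1, hzp2⟩ := hmemB.mp hq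
      obtain ⟨hp1i, hp2i, hp12⟩ := hmemT.mp hpT
      obtain ⟨hq1i, hq2i, hq12⟩ := hmemT.mp hqT
      have hia : i ≠ p.1 := Ne.symm hp1i
      have hyz : y = z := by
        have hu := steiner hC hx hia
        exact hu.unique ⟨hy, hyi, hyp1⟩ (by rw [hpq]; exact ⟨hz, hzi, hzp1⟩)
      subst hyz
      obtain ⟨w, hw⟩ := third_elt hia hy.2 hyi hyp1
      have hp2w : p.2 = w := by
        have : p.2 ∈ ds x y \ {i, p.1} := by
          rw [Finset.mem_sdiff, mem_ds]
          exact ⟨hyp2, by simp [hp2i, Ne.symm hp12]⟩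
        rw [hw] at this; simpa using this
      have hq2w : q.2 = w := by
        have : q.2 ∈ ds x y \ {i, p.1} := by
          rw [Finset.mem_sdiff, mem_ds]
          exact ⟨hzp2, by simp [hq2i, hpq ▸ Ne.symm hq12]⟩
        rw [hw] at this; simpa using this
      exact Prod.ext hpq (hp2w.trans hq2w.symm)
    · intro a ha
      have hai : a ≠ i := (Finset.mem_erase.mp ha).1
      have hia : i ≠ a := Ne.symm hai
      obtain ⟨y, ⟨⟨hyC, hy3⟩, hyi, hya⟩, _⟩ := steiner hC hx hia
      obtain ⟨w, hw⟩ := third_elt hia hy3 hyi hya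
      have hwmem : w ∈ ds x y \ {i, a} := by rw [hw]; simp
      rw [Finset.mem_sdiff, mem_ds] at hwmem
      obtain ⟨hyw, hwia⟩ := hwmem
      simp only [Finset.mem_insert, Finset.mem_singleton, not_or] at hwia
      refine ⟨(a, w), ?_, rfl⟩
      refine hmemB.mpr ⟨hmemT.mpr ⟨hai, hwia.1, Ne.symm hwia.2⟩, y, ⟨hyC, hy3⟩, hyi, hya, hyw⟩
  have hdisj : ∀ p, p ∈ S.biUnion f → p ∉ Bad := by
    intro p hp hpB
    obtain ⟨y, hyS, hpf⟩ := Finset.mem_biUnion.mp hp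
    obtain ⟨hyC, hy3, hyi⟩ := hmemS.mp hyS
    obtain ⟨h1, h2, h12⟩ := hmemf.mp hpf
    obtain ⟨_, z, hz, hzi, hz1, hz2⟩ := hmemB.mp hpB
    have : y = z := (steiner hC hx h12).unique ⟨⟨hyC, hy3⟩, h1, h2⟩ ⟨hz, hz1, hz2⟩
    exact hzi (this ▸ hyi.symm)
  have hunion : T = S.biUnion f ∪ Bad := by
    apply Finset.Subset.antisymm
    · intro p hp
      obtain ⟨hp1i, hp2i, hp12⟩ := hmemT.mp hp
      obtain ⟨y, ⟨⟨hyC, hy3⟩, h1, h2⟩, _⟩ := steiner hC hx hp12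
      by_cases hyi : x i = y i
      · refine Finset.mem_union_left _ (Finset.mem_biUnion.mpr ⟨y, ?_, ?_⟩)
        · exact hmemS.mpr ⟨hyC, hy3, hyi.symm⟩
        · exact hmemf.mpr ⟨h1, h2, hp12⟩
      · exact Finset.mem_union_right _ (hmemB.mpr ⟨hp, y, ⟨hyC, hy3⟩, hyi, h1, h2⟩)
    · intro p hp
      rcases Finset.mem_union.mp hp with h | h
      · obtain ⟨y, hyS, hpf⟩ := Finset.mem_biUnion.mp h
        exact hfsubT y hyS hpf
      · exact (hmemB.mp h).1
  have hpairwise : ∀ y₁ ∈ S, ∀ y₂ ∈ S, y₁ ≠ y₂ → Disjoint (f y₁) (f y₂) := by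
    intro y₁ h₁ y₂ h₂ hne
    rw [Finset.disjoint_left]
    intro p hp1 hp2
    obtain ⟨ha1, hb1, h12⟩ := hmemf.mp hp1
    obtain ⟨ha2, hb2, _⟩ := hmemf.mp hp2
    obtain ⟨hyC1, hy31, _⟩ := hmemS.mp h₁
    obtain ⟨hyC2, hy32, _⟩ := hmemS.mp h₂
    exact hne ((steiner hC hx h12).unique ⟨⟨hyC1, hy31⟩, ha1, hb1⟩ ⟨⟨hyC2, hy32⟩, ha2, hb2⟩)
  have hbi : (S.biUnion f).card = 6 * S.card := by
    rw [Finset.card_biUnion hpairwise, Finset.sum_congr rfl hfcard]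
    simp [Finset.sum_const, Nat.mul_comm]
  have hcards : (n - 1) * (n - 2) = 6 * S.card + (n - 1) := by
    rw [← hTcard, hunion, Finset.card_union_of_disjoint (Finset.disjoint_left.mpr hdisj),
      hbi, hBadcard]
  generalize hq : S.card = s at hcards ⊢
  obtain ⟨k, rfl⟩ : ∃ k, n = k + 7 := ⟨n - 7, by omega⟩
  have e1 : k + 7 - 1 = k + 6 := by omega
  have e2 : k + 7 - 2 = k + 5 := by omega
  have e3 : k + 7 - 3 = k + 4 := by omega
  rw [e1, e2] at hcards
  rw [e1, e3]
  have hexp : (k + 6) * (k + 5) = (k + 6) * (k + 4) + (k + 6) := by ring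
  rw [hexp] at hcards
  generalize (k + 6) * (k + 4) = A at hcards ⊢
  omega

end

theorem stmt_18 (r n : ℕ) (hr : 3 ≤ r) (hn : n = 2 ^ r - 1)
    (C : Set (Fin n → ZMod 2)) (hC : IsPerfectCode n C) (i : Fin n)
    (x : Fin n → ZMod 2) (hx : x ∈ C) (hxe : IEven n i x) :
    {y ∈ C | ¬ IEven n i y ∧ hammingDist x y = 3}.ncard = (n - 1) * (n - 3) / 6 := by
  classical
  have hn7 : 7 ≤ n := by
    have h8 : 2 ^ 3 ≤ 2 ^ r := Nat.pow_le_pow_right (by norm_num) hr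
    norm_num at h8
    omega
  have hset : {y ∈ C | ¬ IEven n i y ∧ hammingDist x y = 3}
      = ↑(Finset.univ.filter (fun y => y ∈ C ∧ hammingDist x y = 3 ∧ y i = x i)) := by
    ext y
    simp only [Set.mem_setOf_eq, Finset.coe_filter, Finset.mem_univ, true_and]
    constructor
    · rintro ⟨hyC, hodd, h3⟩; exact ⟨hyC, h3, (iodd_iff hxe h3).mp hodd⟩
    · rintro ⟨hyC, h3, hyi⟩; exact ⟨hyC, (iodd_iff hxe h3).mpr hyi, h3⟩
  rw [hset, Set.ncard_coe_finset]
  exact count_main hn7 hC i hx
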